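/- Let K/K₀ be a quadratic field extension and L/K a finite cyclic extension such that L/K₀ is a dihedral Galois extension. Let σ be a generator of Gal(L/K), τ₁ an automorphism of L of order 2 with στ₁ = τ₁σ^{-1}, τ₂ = στ₁, and L₁ = L^{τ₁}. If a ∈ L* satisfies σ(a)a^{-1} = b·τ₂(b)^{-1} for some b ∈ L*, then a ∈ K*·L₁*. -/

import Mathlib

set_option synthInstance.maxHeartbeats 1000000
set_option maxHeartbeats 4000000

open scoped TensorProduct

noncomputable section

/-- `A` is a central simple algebra over the field `K`. -/
def IsCSA (K A : Type*) [Field K] [Ring A] [Algebra K A] : Prop :=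
  Subalgebra.center K A = ⊥ ∧ IsSimpleRing A ∧ FiniteDimensional K A

/-- `A` is a split central simple algebra over `K`, i.e. a matrix algebra. -/
def IsSplitCSA (K A : Type*) [Field K] [Ring A] [Algebra K A] : Prop :=
  ∃ n : ℕ, 0 < n ∧ Nonempty (A ≃ₐ[K] Matrix (Fin n) (Fin n) K)

/-- Brauer equivalence of algebras over a field `K`. -/
def BrauerEquivalent (K A B : Type*) [Field K] [Ring A] [Algebra K A] [Ring B] [Algebra K B] :
    Prop :=
  ∃ n m : ℕ, 0 < n ∧ 0 < m ∧
    Nonempty ((Matrix (Fin n) (Fin n) A) ≃ₐ[K] Matrix (Fin m) (Fin m) B)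

/-- the `n`-th tensor power of an algebra. -/
def tensorPow (K : Type u) [Field K] (A : AlgCat.{u} K) : ℕ → AlgCat.{u} K
  | 0 => AlgCat.of K K
  | n+1 => AlgCat.of K (A ⊗[K] (tensorPow K A n))

/-- The period (exponent) of a central simple algebra: the least `n > 0` such that the
`n`-th tensor power of `A` is split. -/
def brauerPeriod (K : Type u) [Field K] (A : Type u) [Ring A] [Algebra K A] : ℕ :=
  sInf {n | 0 < n ∧ IsSplitCSA K (tensorPow K (AlgCat.of K A) n)}

/-- `n` is coprime to the characteristic of `κ` (no condition in characteristic zero). -/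
def CoprimeToChar (κ : Type*) [CommRing κ] (n : ℕ) : Prop :=
  ∀ p : ℕ, p.Prime → (p : κ) = 0 → ¬ p ∣ n

/-- full system of `m × m` matrix units in `A`, i.e. `A ≅ Mₘ(B)` for some `B`. -/
def HasMatrixUnits (A : Type*) [Ring A] (m : ℕ) : Prop :=
  ∃ e : Fin m → Fin m → A, (∑ i, e i i = 1) ∧
    ∀ i j k l, e i j * e k l = if j = k then e i l else 0

/-- The (Schur) index of a central simple algebra `A` over `K`. -/
def brauerIndex (K A : Type*) [Field K] [Ring A] [Algebra K A] : ℕ :=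
  sInf {d | 0 < d ∧ HasMatrixUnits A (Nat.sqrt (Module.finrank K A) / d)}

/-- `V` is the valuation subring of `F` given by the height-one prime `(p)` of `R`. -/
def IsValuationAt (R : Type*) {F : Type*} [CommRing R] [Field F] [Algebra R F]
    (V : ValuationSubring F) (p : R) : Prop :=
  (∀ r : R, V.valuation (algebraMap R F r) ≤ 1) ∧
  (∀ r : R, V.valuation (algebraMap R F r) < 1 ↔ p ∣ r)

/-- The field extension `E/F` is unramified at the valuation subring `V` of `F`:
the integral closure of `V` in `E` is étale over `V`. -/
def ExtUnramifiedAt {F : Type u} (E : Type u) [Field F] [Field E] [Algebra F E]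
    (V : ValuationSubring F) : Prop :=
  letI : Algebra V E := ((algebraMap F E).comp V.subtype).toAlgebra
  Algebra.Etale V ↥(integralClosure V E)

/-- An Azumaya algebra over a (local) commutative ring: finite free with
central simple reduction. -/
def IsAzumayaOver (O B : Type*) [CommRing O] [IsLocalRing O] [Ring B] [Algebra O B] : Prop :=
  Module.Free O B ∧ Module.Finite O B ∧
    IsCSA (IsLocalRing.ResidueField O) ((IsLocalRing.ResidueField O) ⊗[O] B)

/-- A central simple algebra `A/F` is unramified at the valuation subring `V` of `F`:
it admits an Azumaya order over `V`. -/
def CSAUnramifiedAt {F : Type*} (A : Type*) [Field F] [Ring A] [Algebra F A]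
    (V : ValuationSubring F) : Prop :=
  letI : Algebra V A :=
    RingHom.toAlgebra' ((algebraMap F A).comp V.subtype)
      (fun c x => Algebra.commutes (V.subtype c) x)
  ∃ 𝒜 : Subalgebra V A, IsAzumayaOver V 𝒜 ∧
    ∀ a : A, ∃ x : 𝒜, ∃ c : V, c ≠ 0 ∧ (V.subtype c) • a = (x : A)

/-- `L` (a complete discretely valued field) is the completion of `F` at the discrete
valuation given by the prime element `p` of `R ⊆ F`. -/
structure IsCompletionAt (R F L : Type*) [CommRing R] [Field F]
    [Algebra R F] [Field L] [Algebra F L] [Valued L (WithZero (Multiplicative ℤ))] (p : R) :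
    Prop where
  complete : CompleteSpace L
  dense : DenseRange (algebraMap F L)
  le_one : ∀ r : R, Valued.v (algebraMap F L (algebraMap R F r)) ≤ 1
  lt_one_iff : ∀ r : R, Valued.v (algebraMap F L (algebraMap R F r)) < 1 ↔ p ∣ r
  uniformizer : Valued.v (algebraMap F L (algebraMap R F p)) =
    ((Multiplicative.ofAdd (-1 : ℤ) : Multiplicative ℤ) : WithZero (Multiplicative ℤ))

/-- `ν` is the reduced norm of the central simple algebra `A` over `K`: under any
splitting-field isomorphism it is computed by the determinant. -/
def IsReducedNorm (K : Type*) [Field K] (A : Type*) [Ring A] [Algebra K A] (ν : A → K) : Prop :=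
  ∀ (L : Type*) [Field L] [Algebra K L] (n : ℕ)
    (iso : (L ⊗[K] A) ≃ₐ[L] Matrix (Fin n) (Fin n) L) (a : A),
    algebraMap K L (ν a) = Matrix.det (iso ((1 : L) ⊗ₜ[K] a))

/-- `B` is (a model of) the cyclic algebra `(E, σ, a)` over `K`. -/
def IsCyclicAlgebra (K E : Type*) [Field K] [Field E] [Algebra K E]
    (σ : E ≃ₐ[K] E) (a : K) (B : Type*) [Ring B] [Algebra K B] : Prop :=
  IsCSA K B ∧ Module.finrank K B = (Module.finrank K E) ^ 2 ∧
  ∃ (ι : E →ₐ[K] B) (x : Bˣ),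
    (∀ e : E, (x : B) * ι e = ι (σ e) * (x : B)) ∧
    (x : B) ^ (Module.finrank K E) = algebraMap K B a

end
universe u

/-- The algebra structure on an `F`-algebra `A` over a subring `W` of `F`. -/
def subringAlg {F A : Type*} [Field F] [Ring A] [Algebra F A] (W : Subring F) :
    Algebra W A :=
  RingHom.toAlgebra' ((algebraMap F A).comp W.subtype)
    (fun c x => Algebra.commutes (W.subtype c : F) x)

/-- Azumaya algebra over a commutative ring: finite projective faithful with
central simple fibres at all maximal ideals. -/
def IsAzumayaAlg (O B : Type u) [CommRing O] [Ring B] [Algebra O B] : Prop :=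
  Module.Finite O B ∧ Module.Projective O B ∧ FaithfulSMul O B ∧
    ∀ m : Ideal O, ∀ hm : m.IsMaximal,
      letI := hm
      letI : Field (O ⧸ m) := Ideal.Quotient.field m
      IsCSA (O ⧸ m) ((O ⧸ m) ⊗[O] B)

open groupCohomology in
/-- Vanishing of continuous cohomology of the topological group `G` with coefficients in
finite discrete continuous modules, in all degrees `> q`. -/
def ContCohomVanishAbove (G : Type u) [Group G] [TopologicalSpace G] (q : ℕ) : Prop :=
  ∀ n : ℕ, q ≤ n → ∀ A : Rep.{u} (ULift.{u} ℤ) G, Finite A →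
    (∀ a : A, ∃ U : Subgroup G, IsOpen (U : Set G) ∧ ∀ g ∈ U, A.ρ g a = a) →
    ∀ f : (Fin (n + 1) → G) → A,
      (letI : TopologicalSpace A := ⊥; Continuous f) →
      (inhomogeneousCochains.d A (n + 1)).hom f = 0 →
      ∃ g : (Fin n → G) → A,
        (letI : TopologicalSpace A := ⊥; Continuous g) ∧ (inhomogeneousCochains.d A n).hom g = f

/-- The Galois cohomological dimension of a field `k` is at most `q` :
continuous cohomology of the absolute Galois group with finite discrete coefficients
vanishes in degrees `> q`. -/
def cohomDimLE (k : Type u) [Field k] (q : ℕ) : Prop :=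
  ContCohomVanishAbove (AlgebraicClosure k ≃ₐ[k] AlgebraicClosure k) q

theorem statement_1 (K₀ K L : Type u) [Field K₀] [Field K] [Field L]
    [Algebra K₀ K] [Algebra K₀ L] [Algebra K L] [IsScalarTower K₀ K L]
    (hquad : Module.finrank K₀ K = 2)
    [FiniteDimensional K₀ L] [IsGalois K₀ L] [IsGalois K L]
    (σ : L ≃ₐ[K] L) (hσ : ∀ g : L ≃ₐ[K] L, g ∈ Subgroup.zpowers σ)
    (τ₁ : L ≃ₐ[K₀] L) (hτ₁sq : τ₁ * τ₁ = 1) (hτ₁ne : τ₁ ≠ 1)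
    (hτ₁K : ∃ c : K, τ₁ (algebraMap K L c) ≠ algebraMap K L c)
    (hrel : (σ.restrictScalars K₀) * τ₁ = τ₁ * (σ.restrictScalars K₀)⁻¹)
    (a b : L) (ha : a ≠ 0) (hb : b ≠ 0)
    (hab : σ a * a⁻¹ = b * (((σ.restrictScalars K₀) * τ₁) b)⁻¹) :
    ∃ (k : K) (l : L), l ∈ IntermediateField.fixedField (Subgroup.zpowers τ₁) ∧
      a = algebraMap K L k * l := by
  
  classical
  have hτ₁τ₁ : ∀ x : L, τ₁ (τ₁ x) = x := fun x => by
    simpa using DFunLike.congr_fun hτ₁sq x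
  have G1 : (σ.restrictScalars K₀) * τ₁ * (σ.restrictScalars K₀) = τ₁ := by
    rw [hrel]; group
  set T : L → L := fun x => σ (τ₁ x) with hTdef
  have hTσ : ∀ x : L, T (σ x) = τ₁ x := fun x => by
    simpa [AlgEquiv.mul_apply] using DFunLike.congr_fun G1 x
  have hTT : ∀ x : L, T (T x) = x := fun x => by
    have h1 := hTσ (τ₁ x); rw [hτ₁τ₁] at h1; exact h1
  have hTmul : ∀ x y : L, T (x*y) = T x * T y := fun x y => by simp [hTdef]
  have hτa : τ₁ a ≠ 0 := fun h => ha (by simpa using congrArg τ₁ h)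
  have hTb : T b ≠ 0 := fun h => hb (by simpa [hTT, hTdef] using congrArg T h)
  have hTa : T a ≠ 0 := fun h => ha (by simpa [hTT, hTdef] using congrArg T h)
  -- E1
  have hab' : σ a * a⁻¹ = b * (T b)⁻¹ := hab
  have E1 : σ a * T b = b * a := by
    field_simp at hab'
    linear_combination hab'
  have E2 : τ₁ a * b = T b * T a := by
    have h := congrArg T E1
    rw [hTmul, hTmul, hTσ, hTT] at h
    exact h
  have E3 : σ a * τ₁ a = a * T a := by
    have h : σ a * τ₁ a * b = a * T a * b := by
      linear_combination σ a * E2 + T a * E1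
    exact mul_right_cancel₀ hb h
  -- s := a / τ₁ a  is fixed by σ
  set s : L := a * (τ₁ a)⁻¹ with hsdef
  have hs0 : s ≠ 0 := mul_ne_zero ha (inv_ne_zero hτa)
  have hss : σ s = s := by
    have h1 : σ s = σ a * (T a)⁻¹ := by
      rw [hsdef, map_mul, map_inv₀]
    rw [h1, hsdef]
    field_simp
    linear_combination E3
    
  -- anything fixed by σ is in the image of K
  have hbot : ∀ x : L, σ x = x → ∃ c : K, algebraMap K L c = x := by
    intro x hx
    have hmem : σ ∈ MulAction.stabilizer (L ≃ₐ[K] L) x := hx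
    have hle : Subgroup.zpowers σ ≤ MulAction.stabilizer (L ≃ₐ[K] L) x :=
      Subgroup.zpowers_le.mpr hmem
    haveI : FiniteDimensional K L := FiniteDimensional.right K₀ K L
    have hfix : x ∈ IntermediateField.fixedField (⊤ : Subgroup (L ≃ₐ[K] L)) := by
      intro g
      exact hle (hσ g.1)
    rw [← (IntermediateField.fixingSubgroup_bot : (⊥ : IntermediateField K L).fixingSubgroup = ⊤),
      IsGalois.fixedField_fixingSubgroup (⊥ : IntermediateField K L)] at hfix
    exact (IntermediateField.mem_bot.mp hfix).imp (fun c hc => hc)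
  obtain ⟨c₀, hc₀⟩ := hbot s hss
  -- τ₁ preserves the image of K
  have hτK : ∀ c : K, ∃ c' : K, algebraMap K L c' = τ₁ (algebraMap K L c) := by
    intro c
    apply hbot
    have h1 := hTσ (algebraMap K L c)
    rw [AlgEquiv.commutes] at h1
    exact h1
  -- norm of s is 1
  have hnorm : s * τ₁ s = 1 := by
    rw [hsdef, map_mul, map_inv₀, hτ₁τ₁]
    field_simp
  -- Hilbert 90 by hand: find khat in K-image, nonzero, with s * τ₁ khat = khat
  have hkhat : ∃ khat : L, (∃ k : K, algebraMap K L k = khat) ∧ khat ≠ 0 ∧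
      s * τ₁ khat = khat := by
    by_cases hs1 : s = -1
    · obtain ⟨c, hc⟩ := hτ₁K
      obtain ⟨c', hc'⟩ := hτK c
      refine ⟨τ₁ (algebraMap K L c) - algebraMap K L c, ⟨c' - c, ?_⟩, sub_ne_zero.mpr hc, ?_⟩
      · rw [map_sub, hc']
      · rw [map_sub, hτ₁τ₁, hs1]; ring
    · refine ⟨s + 1, ⟨c₀ + 1, by rw [map_add, map_one, hc₀]⟩, ?_, ?_⟩
      · intro h; exact hs1 (by linear_combination h)
      · have hτs : τ₁ s = s⁻¹ := by
          field_simp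
          linear_combination hnorm
        rw [map_add, map_one, hτs]
        field_simp
        ring
  obtain ⟨khat, ⟨k, hk⟩, hkhat0, hkey⟩ := hkhat
  have hτkhat : τ₁ khat ≠ 0 := fun h => hkhat0 (by simpa [hτ₁τ₁] using congrArg τ₁ h)
  refine ⟨k, khat⁻¹ * a, ?_, ?_⟩
  · -- fixed by τ₁, hence by zpowers τ₁
    have hτl : τ₁ (khat⁻¹ * a) = khat⁻¹ * a := by
      rw [map_mul, map_inv₀]
      have hkey' : a * τ₁ khat = khat * τ₁ a := by
        have := hkey
        rw [hsdef] at this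
        field_simp at this
        linear_combination this
      field_simp
      linear_combination - hkey'
    have hmem : τ₁ ∈ MulAction.stabilizer (L ≃ₐ[K₀] L) (khat⁻¹ * a) := hτl
    have hle := Subgroup.zpowers_le.mpr hmem
    intro g
    exact hle g.2
  · rw [hk]
    field_simp
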